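/- With $w_i = \lambda_i(e_1 + \cdots + e_i)$, $\lambda_1 \ge \cdots \ge \lambda_d > 0$, the Euclidean distance from the origin to the affine hyperplane through $w_1, \dots, w_d$ is at least $\lambda_d$. -/

import Mathlib

open scoped InnerProductSpace

theorem stmt5 (d : ℕ) (hd : 0 < d) (l : Fin d → ℝ)
    (hmono : Antitone l) (hpos : ∀ i, 0 < l i)
    (w : Fin d → EuclideanSpace ℝ (Fin d))
    (hw : ∀ i, w i = ∑ j ∈ Finset.Iic i, l i • EuclideanSpace.single j (1 : ℝ)) :
    l ⟨d - 1, by omega⟩ ≤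
      Metric.infDist (0 : EuclideanSpace ℝ (Fin d))
        (affineSpan ℝ (Set.range w) : Set (EuclideanSpace ℝ (Fin d))) := by
  classical
  set lst : Fin d := ⟨d - 1, by omega⟩ with hlst
  -- F n = 1 / l (n-1) for 1 ≤ n ≤ d, else 0
  set F : ℕ → ℝ := fun n => if h : 0 < n ∧ n ≤ d then 1 / l ⟨n - 1, by omega⟩ else 0 with hF
  obtain ⟨a, ha⟩ : ∃ a : EuclideanSpace ℝ (Fin d), ∀ i, a i = F (i.1 + 1) - F i.1 :=
    ⟨WithLp.toLp 2 (fun i : Fin d => F (i.1 + 1) - F i.1), fun _ => rfl⟩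
  have hF0 : F 0 = 0 := by simp [hF]
  have hFsucc : ∀ i : Fin d, F (i.1 + 1) = 1 / l i := by
    intro i
    simp only [hF]
    rw [dif_pos ⟨Nat.succ_pos _, i.2⟩]
    simp
  -- partial sums of a
  have hIic : ∀ k : Fin d, ∑ j ∈ Finset.Iic k, a j = 1 / l k := by
    intro k
    have h0 : ∑ j ∈ Finset.Iic k, a j = ∑ j ∈ Finset.Iic k, (F (j.1 + 1) - F j.1) :=
      Finset.sum_congr rfl fun j _ => ha j
    have h1 : ∑ j ∈ Finset.Iic k, (F (j.1 + 1) - F j.1)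
        = ∑ n ∈ Finset.Iic k.1, (F (n + 1) - F n) := by
      rw [← Fin.map_valEmbedding_Iic, Finset.sum_map]
      rfl
    rw [h0]
    have h2 : (Finset.Iic k.1) = Finset.range (k.1 + 1) := by
      ext n; simp
    rw [h1, h2, Finset.sum_range_sub, hF0, hFsucc, sub_zero]
  have hanonneg : ∀ i : Fin d, 0 ≤ a i := by
    intro i
    rw [ha i, sub_nonneg, hFsucc]
    by_cases h : 0 < i.1
    · have : F i.1 = 1 / l ⟨i.1 - 1, by omega⟩ := by
        simp only [hF]; rw [dif_pos ⟨h, le_of_lt i.2⟩]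
      rw [this]
      apply one_div_le_one_div_of_le (hpos i)
      exact hmono (by simp [Fin.le_def])
    · have : F i.1 = 0 := by simp only [hF]; rw [dif_neg]; omega
      rw [this]
      have := hpos i
      positivity
  have hsum_all : ∑ i, a i = 1 / l lst := by
    have : (Finset.univ : Finset (Fin d)) = Finset.Iic lst := by
      ext i; simp [Fin.le_def, hlst]; omega
    rw [this, hIic]
  -- inner products with w
  have hinner_w : ∀ i : Fin d, ⟪a, w i⟫_ℝ = 1 := by
    intro i
    rw [hw i, inner_sum]
    have : ∀ j ∈ Finset.Iic i, ⟪a, l i • EuclideanSpace.single j (1:ℝ)⟫_ℝ = l i * a j := by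
      intro j _
      rw [real_inner_smul_right, EuclideanSpace.inner_single_right]
      simp [mul_comm]
    rw [Finset.sum_congr rfl this, ← Finset.mul_sum, hIic, mul_one_div,
      div_self (hpos i).ne']
  -- norm of a
  have hna : ‖a‖ ≤ 1 / l lst := by
    have h1 : ‖a‖ ^ 2 = ∑ i, a i ^ 2 := by
      rw [← real_inner_self_eq_norm_sq]
      rw [PiLp.inner_apply]
      simp [sq]
    have h2 : ∑ i, a i ^ 2 ≤ (∑ i, a i) ^ 2 :=
      Finset.sum_sq_le_sq_sum_of_nonneg (fun i _ => hanonneg i)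
    have h3 : ‖a‖ ^ 2 ≤ (1 / l lst) ^ 2 := by rw [h1, ← hsum_all]; exact h2
    have h4 : (0:ℝ) < 1 / l lst := by have := hpos lst; positivity
    nlinarith [norm_nonneg a]
  -- main bound on members of the span
  have key : ∀ y ∈ (affineSpan ℝ (Set.range w) : Set (EuclideanSpace ℝ (Fin d))),
      l lst ≤ dist (0 : EuclideanSpace ℝ (Fin d)) y := by
    intro y hy
    obtain ⟨c, hc, rfl⟩ := eq_affineCombination_of_mem_affineSpan_of_fintype hy
    rw [Finset.affineCombination_eq_linear_combination _ _ _ hc]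
    have hinner : ⟪a, ∑ i, c i • w i⟫_ℝ = 1 := by
      rw [inner_sum]
      simp only [real_inner_smul_right, hinner_w, mul_one]
      exact hc
    have hcs : (1:ℝ) ≤ ‖a‖ * ‖∑ i, c i • w i‖ := by
      calc (1:ℝ) = ⟪a, ∑ i, c i • w i⟫_ℝ := hinner.symm
        _ ≤ ‖a‖ * ‖∑ i, c i • w i‖ := real_inner_le_norm _ _
    rw [dist_zero_left]
    have hl : 0 < l lst := hpos lst
    have h5 : ‖a‖ * ‖∑ i, c i • w i‖ ≤ (1 / l lst) * ‖∑ i, c i • w i‖ :=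
      mul_le_mul_of_nonneg_right hna (norm_nonneg _)
    have hinv : l lst * (1 / l lst) = 1 := by field_simp
    nlinarith [norm_nonneg (∑ i, c i • w i), norm_nonneg a]
  have hne : (affineSpan ℝ (Set.range w) : Set (EuclideanSpace ℝ (Fin d))).Nonempty :=
    ⟨w lst, subset_affineSpan ℝ _ (Set.mem_range_self lst)⟩
  rw [← not_lt]
  intro h
  obtain ⟨y, hy, hlt⟩ := (Metric.infDist_lt_iff hne).mp h
  exact absurd (key y hy) (not_le.mpr hlt)
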